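/- Let X and Y be simplicial complexes on the same vertex set V, with dim Y = n, and let Δ denote the full simplex on V. Let K = ∪_{σ ∈ Y} |Δ[σ]| × |D_Y(σ)| ⊆ |Y| × |sd(Y)| and L = ∪_{σ ∈ Y} |X[σ]| × |D_Y(σ)| ⊆ |X ∩ Y| × |sd(Y)|, where |·| denotes geometric realization. Then the projection onto the first coordinate π : K → |Y| is a homotopy equivalence, and its restriction π|_L : L → |X ∩ Y| is a homotopy equivalence. -/

import Mathlib

open Finset

/-- A finite abstract simplicial complex on the vertex type `V` (possibly void;
any non-void complex contains the empty face `∅` by downward closure). -/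
structure SComplex (V : Type) [DecidableEq V] where
  faces : Finset (Finset V)
  down_closed : ∀ ⦃σ : Finset V⦄, σ ∈ faces → ∀ ⦃τ : Finset V⦄, τ ⊆ σ → τ ∈ faces

namespace SComplex

variable {V : Type} [DecidableEq V]

/-- Intersection of two simplicial complexes on the same vertex set. -/
def inter (X Y : SComplex V) : SComplex V where
  faces := X.faces ∩ Y.faces
  down_closed := fun σ hσ τ hτ => by
    rw [Finset.mem_inter] at hσ ⊢
    exact ⟨X.down_closed hσ.1 hτ, Y.down_closed hσ.2 hτ⟩

/-- Union of two simplicial complexes on the same vertex set. -/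
def union (X Y : SComplex V) : SComplex V where
  faces := X.faces ∪ Y.faces
  down_closed := fun σ hσ τ hτ => by
    rw [Finset.mem_union] at hσ ⊢
    exact hσ.elim (fun h => Or.inl (X.down_closed h hτ)) (fun h => Or.inr (Y.down_closed h hτ))

/-- The induced subcomplex `X[S] = {σ ∈ X : σ ⊆ S}`. -/
def induced (X : SComplex V) (S : Finset V) : SComplex V where
  faces := X.faces.filter (fun σ => σ ⊆ S)
  down_closed := fun σ hσ τ hτ => by
    rw [Finset.mem_filter] at hσ ⊢
    exact ⟨X.down_closed hσ.1 hτ, hτ.trans hσ.2⟩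

/-- The link `lk(X,A) = {τ ∈ X : τ ∩ A = ∅, τ ∪ A ∈ X}`; it is the void
complex when `A ∉ X`. -/
def link (X : SComplex V) (A : Finset V) : SComplex V where
  faces := X.faces.filter (fun τ => τ ∩ A = ∅ ∧ τ ∪ A ∈ X.faces)
  down_closed := fun σ hσ τ hτ => by
    rw [Finset.mem_filter] at hσ ⊢
    refine ⟨X.down_closed hσ.1 hτ, Finset.subset_empty.1 ?_,
      X.down_closed hσ.2.2 (Finset.union_subset_union hτ (Finset.Subset.refl A))⟩
    rw [← hσ.2.1]
    exact Finset.inter_subset_inter hτ (Finset.Subset.refl A)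

/-- The full simplex `Δ(A)` on a vertex set `A`. -/
def simplexOn (A : Finset V) : SComplex V where
  faces := A.powerset
  down_closed := fun σ hσ τ hτ =>
    Finset.mem_powerset.2 (hτ.trans (Finset.mem_powerset.1 hσ))

/-- The boundary `∂Δ(A)` of the simplex on `A` (all proper subsets of `A`). -/
def bdSimplex (A : Finset V) : SComplex V where
  faces := A.powerset.erase A
  down_closed := fun σ hσ τ hτ => by
    rw [Finset.mem_erase, Finset.mem_powerset] at hσ ⊢
    refine ⟨fun hτA => hσ.1 ?_, hτ.trans hσ.2⟩
    subst hτA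
    exact Finset.Subset.antisymm hσ.2 hτ

variable [Fintype V]

/-- Intersection of a finite family of complexes on the same vertex set. -/
def interFam {r : ℕ} (X : Fin r → SComplex V) : SComplex V where
  faces := Finset.univ.filter (fun σ => ∀ i, σ ∈ (X i).faces)
  down_closed := fun σ hσ τ hτ => by
    rw [Finset.mem_filter] at hσ ⊢
    exact ⟨Finset.mem_univ τ, fun i => (X i).down_closed (hσ.2 i) hτ⟩

/-- Union of a finite family of complexes on the same vertex set. -/
def unionFam {r : ℕ} (X : Fin r → SComplex V) : SComplex V where
  faces := Finset.univ.filter (fun σ => ∃ i, σ ∈ (X i).faces)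
  down_closed := fun σ hσ τ hτ => by
    rw [Finset.mem_filter] at hσ ⊢
    obtain ⟨-, i, hi⟩ := hσ
    exact ⟨Finset.mem_univ τ, i, (X i).down_closed hi hτ⟩

/-- The join of a family of complexes `Z i`, the `i`-th one having its vertices
inside the block `Vs i` of a partition of the vertex set: the faces are the sets
whose trace on each block is a face of the corresponding complex. -/
def joinFam {r : ℕ} (Vs : Fin r → Finset V) (Z : Fin r → SComplex V) : SComplex V where
  faces := Finset.univ.filter (fun σ => ∀ i, σ ∩ Vs i ∈ (Z i).faces)
  down_closed := fun σ hσ τ hτ => by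
    rw [Finset.mem_filter] at hσ ⊢
    exact ⟨Finset.mem_univ τ, fun i =>
      (Z i).down_closed (hσ.2 i) (Finset.inter_subset_inter hτ (Finset.Subset.refl _))⟩

/-- The Alexander dual `X* = {τ : [n] - τ ∉ X}`. -/
def dual (X : SComplex V) : SComplex V where
  faces := Finset.univ.filter (fun τ => τᶜ ∉ X.faces)
  down_closed := fun σ hσ τ hτ => by
    rw [Finset.mem_filter] at hσ ⊢
    exact ⟨Finset.mem_univ τ, fun hc => hσ.2 (X.down_closed hc (Finset.compl_subset_compl.2 hτ))⟩

/-- The set of faces of `X` of cardinality `k` (i.e. of dimension `k - 1`). -/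
def cells (X : SComplex V) (k : ℕ) : Finset (Finset V) :=
  X.faces.filter (fun σ => σ.card = k)

/-- The space of simplicial `(k-1)`-dimensional chains of `X` with coefficients
in `K`: chains are indexed by cardinality, so degree `k` chains are spanned by
the faces of cardinality `k`.  (In particular degree `0` chains are spanned by
the empty face, giving the augmented chain complex computing reduced homology.) -/
abbrev Chains (K : Type) [Field K] (X : SComplex V) (k : ℕ) : Type := ↥(X.cells k) → K

/-- The simplicial boundary map from degree `k+1` chains (on faces of
cardinality `k+1`) to degree `k` chains.  Signs are computed with respect to a
fixed enumeration of the vertices. -/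
noncomputable def boundary (K : Type) [Field K] (X : SComplex V) (k : ℕ) :
    Chains K X (k+1) →ₗ[K] Chains K X k :=
  LinearMap.pi fun τ =>
    ∑ σ : ↥(X.cells (k+1)),
      (∑ v ∈ (σ : Finset V),
        if (σ : Finset V).erase v = (τ : Finset V) then
          ((-1 : K) ^ (((σ : Finset V)).filter
            (fun w => Fintype.equivFin V w < Fintype.equivFin V v)).card)
        else 0) • LinearMap.proj σ

/-- Cycles of the (augmented) simplicial chain complex in degree `k`
(corresponding to homological dimension `k - 1`). -/
noncomputable def cyclesSub (K : Type) [Field K] (X : SComplex V) :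
    (k : ℕ) → Submodule K (Chains K X k)
  | 0 => ⊤
  | (m+1) => LinearMap.ker (boundary K X m)

/-- The reduced simplicial homology `H̃_{k-1}(X; K)` (cardinality-indexed: the
argument `k` corresponds to homological dimension `k - 1`). -/
noncomputable abbrev RedHomology (K : Type) [Field K] (X : SComplex V) (k : ℕ) : Type :=
  ↥(cyclesSub K X k) ⧸ Submodule.comap (cyclesSub K X k).subtype
      (LinearMap.range (boundary K X k))

/-- `h̃_{k-1}(X) = dim_K H̃_{k-1}(X; K)` (cardinality-indexed, as in
`RedHomology`). -/
noncomputable def redHomDim (K : Type) [Field K] (X : SComplex V) (k : ℕ) : ℕ :=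
  Module.finrank K (RedHomology K X k)

/-- `dim_K H̃_k(X; K)` for an arbitrary integer `k`; it is zero for `k ≤ -2`.
Here the argument is the genuine homological dimension `k`. -/
noncomputable def redHomDimZ (K : Type) [Field K] (X : SComplex V) (k : ℤ) : ℕ :=
  if 0 ≤ k + 1 then redHomDim K X (k + 1).toNat else 0

/-- Chains supported on the faces of a subcomplex `A`, inside the chains of `X`. -/
noncomputable def subChains (K : Type) [Field K] (X A : SComplex V) (k : ℕ) :
    Submodule K (Chains K X k) :=
  ⨅ (σ : ↥(X.cells k)) (_ : (σ : Finset V) ∉ A.faces), LinearMap.ker (LinearMap.proj σ)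

/-- Relative cycles in homological dimension `i` for the pair `(X, A)`. -/
noncomputable def relCycles (K : Type) [Field K] (X A : SComplex V) (i : ℕ) :
    Submodule K (Chains K X (i+1)) :=
  Submodule.comap (boundary K X i) (subChains K X A i)

/-- The relative simplicial homology `H_i(X, A; K)` of the pair `(X, A)`. -/
noncomputable abbrev RelHomology (K : Type) [Field K] (X A : SComplex V) (i : ℕ) : Type :=
  ↥(relCycles K X A i) ⧸ Submodule.comap (relCycles K X A i).subtype
      (subChains K X A (i+1) ⊔ LinearMap.range (boundary K X (i+1)))

/-- `dim_K H_i(X, A; K)`. -/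
noncomputable def relHomDim (K : Type) [Field K] (X A : SComplex V) (i : ℕ) : ℕ :=
  Module.finrank K (RelHomology K X A i)

/-- `X` is `d`-Leray over `K`: every induced subcomplex has vanishing reduced
homology in dimensions `≥ d`. -/
def IsLeray (K : Type) [Field K] (d : ℕ) (X : SComplex V) : Prop :=
  ∀ S : Finset V, ∀ i : ℕ, d ≤ i → redHomDim K (X.induced S) (i + 1) = 0

/-- The Leray number `L_K(X)`: the minimal `d` such that `X` is `d`-Leray over `K`. -/
noncomputable def lerayNum (K : Type) [Field K] (X : SComplex V) : ℕ :=
  sInf {d | IsLeray K d X}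

end SComplex
namespace SComplex

variable {V : Type} [DecidableEq V]

/-- The order complex of a collection `C` of finsets (ordered by inclusion):
its vertices are the members of `C` and its faces are the chains in `C`. -/
def orderComplex (C : Finset (Finset V)) : SComplex (Finset V) where
  faces := C.powerset.filter (fun c => ∀ τ₁ ∈ c, ∀ τ₂ ∈ c, τ₁ ⊆ τ₂ ∨ τ₂ ⊆ τ₁)
  down_closed := fun c hc c' hcc' => by
    rw [Finset.mem_filter, Finset.mem_powerset] at hc ⊢
    exact ⟨hcc'.trans hc.1, fun τ₁ h1 τ₂ h2 => hc.2 τ₁ (hcc' h1) τ₂ (hcc' h2)⟩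

/-- The barycentric subdivision `sd(X)`: the order complex of the poset of
non-empty faces of `X`. -/
def sd (X : SComplex V) : SComplex (Finset V) :=
  orderComplex (X.faces.erase ∅)

/-- The dual cell `D_X(σ)`: the order complex of the interval
`[σ,·] = {τ ∈ X : σ ⊆ τ}`. -/
def dualCell (X : SComplex V) (σ : Finset V) : SComplex (Finset V) :=
  orderComplex (X.faces.filter (fun τ => σ ⊆ τ))

/-- The reduced dual cell `Ḋ_X(σ)`: the order complex of the interval
`(σ,·] = {τ ∈ X : σ ⊊ τ}`. -/
def dualCellBd (X : SComplex V) (σ : Finset V) : SComplex (Finset V) :=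
  orderComplex (X.faces.filter (fun τ => σ ⊆ τ ∧ σ ≠ τ))

open scoped Classical in
/-- The geometric realization of `X`, inside `V → ℝ`: the set of probability
vectors on `V` whose support is a face of `X`. -/
noncomputable def geomReal [Fintype V] (X : SComplex V) : Set (V → ℝ) :=
  {f | (∀ v, 0 ≤ f v) ∧ (∑ v, f v) = 1 ∧ (Finset.univ.filter (fun v => f v ≠ 0)) ∈ X.faces}

end SComplex

namespace SResolution

open SComplex

open scoped Classical

variable {V : Type} [DecidableEq V] [Fintype V]

/-- support of a vector -/
noncomputable def spt (f : V → ℝ) : Finset V := Finset.univ.filter (fun v => f v ≠ 0)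

lemma mem_spt {f : V → ℝ} {v : V} : v ∈ spt f ↔ f v ≠ 0 := by
  simp [spt]

lemma mem_geomReal_iff {X : SComplex V} {f : V → ℝ} :
    f ∈ geomReal X ↔ (∀ v, 0 ≤ f v) ∧ (∑ v, f v) = 1 ∧ spt f ∈ X.faces := by
  unfold geomReal spt
  exact Iff.rfl

lemma spt_nonempty {f : V → ℝ} (h1 : (∑ v, f v) = 1) : (spt f).Nonempty := by
  by_contra h
  rw [Finset.not_nonempty_iff_eq_empty] at h
  have : ∀ v, f v = 0 := by
    intro v
    by_contra hv
    have : v ∈ spt f := mem_spt.2 hv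
    simp [h] at this
  rw [Finset.sum_congr rfl (fun v _ => this v)] at h1
  simp at h1

/-- the barycentric map on subdivision coordinates -/
noncomputable def hmap (y : Finset V → ℝ) : V → ℝ :=
  fun v => ∑ τ : Finset V, if v ∈ τ then y τ / (τ.card : ℝ) else 0

/-- the top value of `hmap` -/
noncomputable def sval (y : Finset V → ℝ) : ℝ := ∑ τ : Finset V, y τ / (τ.card : ℝ)

lemma hmap_nonneg {y : Finset V → ℝ} (hy : ∀ τ, 0 ≤ y τ) (v : V) : 0 ≤ hmap y v := by
  refine Finset.sum_nonneg fun τ _ => ?_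
  split_ifs
  · exact div_nonneg (hy τ) (Nat.cast_nonneg _)
  · exact le_rfl

lemma hmap_le_sval {y : Finset V → ℝ} (hy : ∀ τ, 0 ≤ y τ) (v : V) : hmap y v ≤ sval y := by
  refine Finset.sum_le_sum fun τ _ => ?_
  split_ifs
  · exact le_rfl
  · exact div_nonneg (hy τ) (by positivity)

lemma hmap_eq_sval {y : Finset V → ℝ} {v : V} (hv : ∀ τ, y τ ≠ 0 → v ∈ τ) :
    hmap y v = sval y := by
  refine Finset.sum_congr rfl fun τ _ => ?_
  by_cases h0 : y τ = 0
  · simp [h0]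
  · rw [if_pos (hv τ h0)]

lemma sum_hmap {y : Finset V → ℝ} (h0 : ∀ τ, y τ ≠ 0 → τ ≠ ∅) :
    ∑ v, hmap y v = ∑ τ, y τ := by
  unfold hmap
  rw [Finset.sum_comm]
  refine Finset.sum_congr rfl fun τ _ => ?_
  by_cases hτ : y τ = 0
  · simp [hτ]
  · have hne : τ ≠ ∅ := h0 τ hτ
    have hcard : (τ.card : ℝ) ≠ 0 := by
      simp [Finset.card_eq_zero, hne]
    rw [Finset.sum_ite_mem, Finset.univ_inter, Finset.sum_const, nsmul_eq_mul]
    field_simp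

lemma hmap_exists_of_ne_zero {y : Finset V → ℝ} {v : V} (h : hmap y v ≠ 0) :
    ∃ τ, y τ ≠ 0 ∧ v ∈ τ := by
  by_contra hc
  push_neg at hc
  apply h
  unfold hmap
  refine Finset.sum_eq_zero fun τ _ => ?_
  by_cases h0 : y τ = 0
  · simp [h0]
  · rw [if_neg (fun hv => (hc τ h0) hv)]

lemma chain_max : ∀ (C : Finset (Finset V)), C.Nonempty →
    (∀ τ₁ ∈ C, ∀ τ₂ ∈ C, τ₁ ⊆ τ₂ ∨ τ₂ ⊆ τ₁) → ∃ M ∈ C, ∀ τ ∈ C, τ ⊆ M := by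
  intro C
  induction C using Finset.induction_on with
  | empty => intro h; exact absurd h (by simp)
  | @insert a s ha ih =>
    intro _ hc
    rcases s.eq_empty_or_nonempty with rfl | hs
    · exact ⟨a, by simp, by simp⟩
    · obtain ⟨M, hM, hMax⟩ := ih hs
        (fun τ₁ h1 τ₂ h2 => hc _ (Finset.mem_insert_of_mem h1) _ (Finset.mem_insert_of_mem h2))
      rcases hc a (Finset.mem_insert_self _ _) M (Finset.mem_insert_of_mem hM) with h | h
      · refine ⟨M, Finset.mem_insert_of_mem hM, fun τ hτ => ?_⟩
        rcases Finset.mem_insert.1 hτ with rfl | hτ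
        · exact h
        · exact hMax _ hτ
      · refine ⟨a, Finset.mem_insert_self _ _, fun τ hτ => ?_⟩
        rcases Finset.mem_insert.1 hτ with rfl | hτ
        · exact Finset.Subset.refl _
        · exact (hMax _ hτ).trans h

/-- The clean description of membership in the blown-up space `K`. -/
def KP (Y : SComplex V) (p : (V → ℝ) × (Finset V → ℝ)) : Prop :=
  (∀ v, 0 ≤ p.1 v) ∧ (∑ v, p.1 v) = 1 ∧ (∀ τ, 0 ≤ p.2 τ) ∧ (∑ τ, p.2 τ) = 1 ∧
  (∀ τ, p.2 τ ≠ 0 → τ ∈ Y.faces ∧ spt p.1 ⊆ τ) ∧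
  (∀ τ₁ τ₂, p.2 τ₁ ≠ 0 → p.2 τ₂ ≠ 0 → τ₁ ⊆ τ₂ ∨ τ₂ ⊆ τ₁)

lemma exists_ne_zero_of_sum_one {α : Type} [Fintype α] {f : α → ℝ} (h : ∑ a, f a = 1) :
    ∃ a, f a ≠ 0 := by
  by_contra hc
  push_neg at hc
  rw [Finset.sum_congr rfl (fun a _ => hc a)] at h
  simp at h

lemma KP.x_spt_nonempty {Y : SComplex V} {p} (hp : KP Y p) : (spt p.1).Nonempty :=
  spt_nonempty hp.2.1

lemma KP.tau_nonempty {Y : SComplex V} {p} (hp : KP Y p) {τ} (hτ : p.2 τ ≠ 0) : τ ≠ ∅ := by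
  obtain ⟨v, hv⟩ := hp.x_spt_nonempty
  exact Finset.ne_empty_of_mem ((hp.2.2.2.2.1 τ hτ).2 hv)

lemma KP.sval_pos {Y : SComplex V} {p} (hp : KP Y p) : 0 < sval p.2 := by
  obtain ⟨τ, hτ⟩ := exists_ne_zero_of_sum_one hp.2.2.2.1
  refine Finset.sum_pos' (fun ρ _ => div_nonneg (hp.2.2.1 ρ) (Nat.cast_nonneg _))
    ⟨τ, Finset.mem_univ τ, div_pos (lt_of_le_of_ne (hp.2.2.1 τ) (Ne.symm hτ)) ?_⟩
  have : τ.Nonempty := Finset.nonempty_iff_ne_empty.2 (hp.tau_nonempty hτ)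
  exact_mod_cast Finset.card_pos.2 this

lemma KP.hmap_eq_min {Y : SComplex V} {p} (hp : KP Y p) (v : V) :
    hmap p.2 v = min (p.1 v + hmap p.2 v) (sval p.2) := by
  by_cases hv : p.1 v = 0
  · rw [hv, zero_add, min_eq_left (hmap_le_sval hp.2.2.1 v)]
  · have he : hmap p.2 v = sval p.2 :=
      hmap_eq_sval (fun τ hτ => (hp.2.2.2.2.1 τ hτ).2 (mem_spt.2 hv))
    rw [he, min_eq_right (le_add_of_nonneg_left (hp.1 v))]

lemma KP.sum_min {Y : SComplex V} {p} (hp : KP Y p) :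
    ∑ v, min (p.1 v + hmap p.2 v) (sval p.2) = 1 := by
  rw [Finset.sum_congr rfl (fun v _ => (hp.hmap_eq_min v).symm),
    sum_hmap (fun τ hτ => hp.tau_nonempty hτ), hp.2.2.2.1]

lemma min_sum_uniq {c : V → ℝ} {s s' : ℝ}
    (h : ∑ v, min (c v) s = ∑ v, min (c v) s') :
    ∀ v, min (c v) s = min (c v) s' := by
  rcases le_total s s' with hss' | hss' <;>
  · intro v
    by_contra hne
    first
    | (have hle : ∀ w ∈ Finset.univ, min (c w) s ≤ min (c w) s' :=
        fun w _ => min_le_min le_rfl hss'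
       have := Finset.sum_lt_sum hle
        ⟨v, Finset.mem_univ v, lt_of_le_of_ne (hle v (Finset.mem_univ v)) hne⟩
       linarith)
    | (have hle : ∀ w ∈ Finset.univ, min (c w) s' ≤ min (c w) s :=
        fun w _ => min_le_min le_rfl hss'
       have := Finset.sum_lt_sum hle
        ⟨v, Finset.mem_univ v, lt_of_le_of_ne (hle v (Finset.mem_univ v)) (Ne.symm hne)⟩
       linarith)

/-- chain-supported nonnegative vectors on nonempty sets -/
def ChainOK (y : Finset V → ℝ) : Prop :=
  (∀ τ, 0 ≤ y τ) ∧ (∀ τ, y τ ≠ 0 → τ ≠ ∅) ∧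
  (∀ τ₁ τ₂, y τ₁ ≠ 0 → y τ₂ ≠ 0 → τ₁ ⊆ τ₂ ∨ τ₂ ⊆ τ₁)

lemma KP.chainOK {Y : SComplex V} {p} (hp : KP Y p) : ChainOK p.2 :=
  ⟨hp.2.2.1, fun τ hτ => hp.tau_nonempty hτ, hp.2.2.2.2.2⟩

noncomputable def sptF (y : Finset V → ℝ) : Finset (Finset V) :=
  Finset.univ.filter (fun τ => y τ ≠ 0)

lemma mem_sptF {y : Finset V → ℝ} {τ} : τ ∈ sptF y ↔ y τ ≠ 0 := by simp [sptF]

lemma le_hmap {y : Finset V → ℝ} (hy : ∀ τ, 0 ≤ y τ) {τ : Finset V} {v : V} (hv : v ∈ τ) :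
    y τ / (τ.card : ℝ) ≤ hmap y v := by
  have h := Finset.single_le_sum (f := fun ρ => if v ∈ ρ then y ρ / (ρ.card : ℝ) else 0)
    (fun ρ _ => by split_ifs; exacts [div_nonneg (hy ρ) (Nat.cast_nonneg _), le_rfl])
    (Finset.mem_univ τ)
  rwa [if_pos hv] at h

lemma eq_zero_of_hmap_eq_zero {y : Finset V → ℝ} (hy : ChainOK y)
    (h : ∀ v, hmap y v = 0) : ∀ τ, y τ = 0 := by
  intro τ
  by_contra hτ
  obtain ⟨v, hv⟩ := Finset.nonempty_iff_ne_empty.2 (hy.2.1 τ hτ)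
  have h1 := le_hmap hy.1 hv
  have h2 : (0:ℝ) < y τ / τ.card :=
    div_pos (lt_of_le_of_ne (hy.1 τ) (Ne.symm hτ))
      (by exact_mod_cast Finset.card_pos.2 ⟨v, hv⟩)
  rw [h v] at h1
  linarith

lemma mem_max_iff_hmap {y : Finset V → ℝ} {M : Finset V} (hy : ChainOK y) (hM : y M ≠ 0)
    (hmax : ∀ τ, y τ ≠ 0 → τ ⊆ M) (v : V) : hmap y v ≠ 0 ↔ v ∈ M := by
  constructor
  · intro h
    obtain ⟨τ, hτ, hvτ⟩ := hmap_exists_of_ne_zero h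
    exact hmax τ hτ hvτ
  · intro h
    have h1 := le_hmap hy.1 h (τ := M)
    have h2 : (0:ℝ) < y M / M.card :=
      div_pos (lt_of_le_of_ne (hy.1 M) (Ne.symm hM))
        (by exact_mod_cast Finset.card_pos.2 ⟨v, h⟩)
    exact ne_of_gt (lt_of_lt_of_le h2 h1)

lemma exists_top_witness {y : Finset V → ℝ} {M : Finset V} (hy : ChainOK y) (hM : y M ≠ 0)
    (hmax : ∀ τ, y τ ≠ 0 → τ ⊆ M) :
    ∃ v₀ ∈ M, ∀ τ, y τ ≠ 0 → τ ≠ M → v₀ ∉ τ := by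
  by_cases hU : ((sptF y).erase M) = ∅
  · obtain ⟨v₀, hv₀⟩ := Finset.nonempty_iff_ne_empty.2 (hy.2.1 M hM)
    refine ⟨v₀, hv₀, fun τ hτ hne _ => ?_⟩
    have : τ ∈ (sptF y).erase M := Finset.mem_erase.2 ⟨hne, mem_sptF.2 hτ⟩
    rw [hU] at this
    simp at this
  · obtain ⟨m', hm', hm'max⟩ := chain_max _ (Finset.nonempty_iff_ne_empty.2 hU)
      (fun τ₁ h1 τ₂ h2 => hy.2.2 τ₁ τ₂ (mem_sptF.1 (Finset.mem_of_mem_erase h1))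
        (mem_sptF.1 (Finset.mem_of_mem_erase h2)))
    have hm'ne : y m' ≠ 0 := mem_sptF.1 (Finset.mem_of_mem_erase hm')
    have hm'M : m' ⊂ M := _root_.ssubset_iff_subset_ne.2
      ⟨hmax m' hm'ne, (Finset.mem_erase.1 hm').1⟩
    obtain ⟨v₀, hv₀M, hv₀m'⟩ := Finset.exists_of_ssubset hm'M
    refine ⟨v₀, hv₀M, fun τ hτ hne hvτ => hv₀m' ?_⟩
    exact hm'max τ (Finset.mem_erase.2 ⟨hne, mem_sptF.2 hτ⟩) hvτ

lemma hmap_witness {y : Finset V → ℝ} {M : Finset V} {v₀ : V} (hv₀ : v₀ ∈ M)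
    (hw : ∀ τ, y τ ≠ 0 → τ ≠ M → v₀ ∉ τ) : hmap y v₀ = y M / (M.card : ℝ) := by
  unfold hmap
  rw [Finset.sum_eq_single M]
  · rw [if_pos hv₀]
  · intro τ _ hne
    by_cases h0 : y τ = 0
    · simp [h0]
    · rw [if_neg (hw τ h0 hne)]
  · intro h
    exact absurd (Finset.mem_univ M) h

lemma hmap_update_zero (y : Finset V → ℝ) (M : Finset V) (v : V) :
    hmap (Function.update y M 0) v
      = hmap y v - (if v ∈ M then y M / (M.card : ℝ) else 0) := by
  unfold hmap
  have key : ∀ τ ∈ Finset.univ,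
      (if v ∈ τ then Function.update y M 0 τ / (τ.card : ℝ) else 0)
        = (if v ∈ τ then y τ / (τ.card : ℝ) else 0)
          - (if τ = M then (if v ∈ M then y M / (M.card : ℝ) else 0) else 0) := by
    intro τ _
    by_cases hτ : τ = M
    · subst hτ
      rw [Function.update_self, if_pos rfl]
      split_ifs <;> simp
    · rw [Function.update_of_ne hτ, if_neg hτ, sub_zero]
  rw [Finset.sum_congr rfl key, Finset.sum_sub_distrib, Finset.sum_ite_eq' Finset.univ M]
  simp

lemma chainOK_update_zero {y : Finset V → ℝ} (hy : ChainOK y) (M : Finset V) :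
    ChainOK (Function.update y M 0) := by
  refine ⟨fun τ => ?_, fun τ h => ?_, fun τ₁ τ₂ h1 h2 => ?_⟩
  · rw [Function.update_apply]
    split_ifs
    · exact le_rfl
    · exact hy.1 τ
  · rw [Function.update_apply] at h
    split_ifs at h
    · exact absurd rfl h
    · exact hy.2.1 τ h
  · rw [Function.update_apply] at h1 h2
    split_ifs at h1 h2
    · exact absurd rfl h1
    · exact absurd rfl h1
    · exact absurd rfl h2
    · exact hy.2.2 τ₁ τ₂ h1 h2

lemma hmap_inj : ∀ (n : ℕ) (y y' : Finset V → ℝ), (sptF y).card ≤ n →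
    ChainOK y → ChainOK y' → hmap y = hmap y' → y = y' := by
  intro n
  induction n with
  | zero =>
    intro y y' hcard hy hy' hh
    have hspt : sptF y = ∅ := Finset.card_eq_zero.1 (Nat.le_zero.1 hcard)
    have hy0 : ∀ τ, y τ = 0 := by
      intro τ
      by_contra hτ
      have : τ ∈ sptF y := mem_sptF.2 hτ
      rw [hspt] at this
      simp at this
    have hh0 : ∀ v, hmap y' v = 0 := by
      intro v
      rw [← hh]
      unfold hmap
      exact Finset.sum_eq_zero fun τ _ => by simp [hy0 τ]
    have hy'0 := eq_zero_of_hmap_eq_zero hy' hh0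
    funext τ
    rw [hy0 τ, hy'0 τ]
  | succ n ih =>
    intro y y' hcard hy hy' hh
    by_cases h0 : sptF y = ∅
    · exact ih y y' (by rw [h0]; simp) hy hy' hh
    · obtain ⟨M, hMmem, hmax0⟩ := chain_max _ (Finset.nonempty_iff_ne_empty.2 h0)
        (fun τ₁ h1 τ₂ h2 => hy.2.2 τ₁ τ₂ (mem_sptF.1 h1) (mem_sptF.1 h2))
      have hM : y M ≠ 0 := mem_sptF.1 hMmem
      have hmax : ∀ τ, y τ ≠ 0 → τ ⊆ M := fun τ hτ => hmax0 τ (mem_sptF.2 hτ)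
      -- `y'` is nonzero, with same maximal element
      have hy'ne : ∃ τ, y' τ ≠ 0 := by
        by_contra hc
        push_neg at hc
        have : ∀ v, hmap y v = 0 := by
          intro v
          rw [hh]
          unfold hmap
          exact Finset.sum_eq_zero fun τ _ => by simp [hc τ]
        exact hM (eq_zero_of_hmap_eq_zero hy this M)
      obtain ⟨M', hM'mem, hmax0'⟩ := chain_max (sptF y')
        ⟨hy'ne.choose, mem_sptF.2 hy'ne.choose_spec⟩
        (fun τ₁ h1 τ₂ h2 => hy'.2.2 τ₁ τ₂ (mem_sptF.1 h1) (mem_sptF.1 h2))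
      have hM' : y' M' ≠ 0 := mem_sptF.1 hM'mem
      have hmax' : ∀ τ, y' τ ≠ 0 → τ ⊆ M' := fun τ hτ => hmax0' τ (mem_sptF.2 hτ)
      have hMM' : M = M' := by
        ext v
        rw [← mem_max_iff_hmap hy hM hmax v, ← mem_max_iff_hmap hy' hM' hmax' v, hh]
      subst hMM'
      -- equal top values
      have hcardM : (0:ℝ) < M.card := by
        exact_mod_cast Finset.card_pos.2 (Finset.nonempty_iff_ne_empty.2 (hy.2.1 M hM))
      have hyM : y M = y' M := by
        obtain ⟨v₀, hv₀, hw⟩ := exists_top_witness hy hM hmax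
        obtain ⟨v₁, hv₁, hw'⟩ := exists_top_witness hy' hM' hmax'
        have e1 : y M / (M.card:ℝ) = hmap y' v₀ := by rw [← hh, hmap_witness hv₀ hw]
        have e2 : y' M / (M.card:ℝ) = hmap y v₁ := by rw [hh, hmap_witness hv₁ hw']
        have le1 : y' M / (M.card:ℝ) ≤ y M / (M.card:ℝ) := by
          rw [e1]; exact le_hmap hy'.1 hv₀
        have le2 : y M / (M.card:ℝ) ≤ y' M / (M.card:ℝ) := by
          rw [e2]; exact le_hmap hy.1 hv₁
        have heq := le_antisymm le2 le1
        rw [div_eq_div_iff (ne_of_gt hcardM) (ne_of_gt hcardM)] at heq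
        exact mul_right_cancel₀ (ne_of_gt hcardM) heq
      -- recurse
      have hupd : hmap (Function.update y M 0) = hmap (Function.update y' M 0) := by
        funext v
        rw [hmap_update_zero, hmap_update_zero, hh, hyM]
      have hcard' : (sptF (Function.update y M 0)).card ≤ n := by
        have hss : sptF (Function.update y M 0) = (sptF y).erase M := by
          ext τ
          rw [mem_sptF, Finset.mem_erase, mem_sptF, Function.update_apply]
          split_ifs with h
          · subst h; simp
          · tauto
        rw [hss, Finset.card_erase_of_mem hMmem]
        omega
      have := ih _ _ hcard' (chainOK_update_zero hy M) (chainOK_update_zero hy' M) hupd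
      funext τ
      by_cases hτ : τ = M
      · subst hτ; exact hyM
      · have := congrFun this τ
        rwa [Function.update_of_ne hτ, Function.update_of_ne hτ] at this

lemma upward_comparable {u : V → ℝ} {τ τ' : Finset V}
    (h1 : ∀ v w, u w ≤ u v → w ∈ τ → v ∈ τ) (h2 : ∀ v w, u w ≤ u v → w ∈ τ' → v ∈ τ') :
    τ ⊆ τ' ∨ τ' ⊆ τ := by
  by_cases hss : τ ⊆ τ'
  · exact Or.inl hss
  · obtain ⟨a, haτ, haτ'⟩ := Finset.not_subset.1 hss
    right
    intro b hb
    by_cases hab : u b ≤ u a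
    · exact absurd (h2 a b hab hb) haτ'
    · push_neg at hab
      exact h1 b a (le_of_lt hab) haτ

lemma hmap_update (y : Finset V → ℝ) (M : Finset V) (c : ℝ) (v : V) :
    hmap (Function.update y M c) v
      = hmap y v + (if v ∈ M then (c - y M) / (M.card : ℝ) else 0) := by
  unfold hmap
  have key : ∀ τ ∈ Finset.univ,
      (if v ∈ τ then Function.update y M c τ / (τ.card : ℝ) else 0)
        = (if v ∈ τ then y τ / (τ.card : ℝ) else 0)
          + (if τ = M then (if v ∈ M then (c - y M) / (M.card : ℝ) else 0) else 0) := by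
    intro τ _
    by_cases hτ : τ = M
    · subst hτ
      rw [Function.update_self, if_pos rfl]
      split_ifs with h
      · rw [← add_div]
        ring_nf
      · simp
    · rw [Function.update_of_ne hτ, if_neg hτ, add_zero]
  rw [Finset.sum_congr rfl key, Finset.sum_add_distrib, Finset.sum_ite_eq' Finset.univ M]
  simp

lemma build : ∀ (n : ℕ) (u : V → ℝ), (spt u).card ≤ n → (∀ v, 0 ≤ u v) →
    ∃ y : Finset V → ℝ, (∀ τ, 0 ≤ y τ) ∧ (∀ v, hmap y v = u v) ∧
      (∀ τ, y τ ≠ 0 → τ.Nonempty ∧ τ ⊆ spt u ∧ (∀ v w, u w ≤ u v → w ∈ τ → v ∈ τ)) := by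
  intro n
  induction n with
  | zero =>
    intro u hc hpos
    have hspt : spt u = ∅ := Finset.card_eq_zero.1 (Nat.le_zero.1 hc)
    have hu0 : ∀ v, u v = 0 := by
      intro v
      by_contra h
      have : v ∈ spt u := mem_spt.2 h
      rw [hspt] at this
      simp at this
    refine ⟨0, fun τ => le_rfl, fun v => ?_, fun τ hτ => absurd rfl hτ⟩
    rw [hu0 v]
    unfold hmap
    exact Finset.sum_eq_zero fun τ _ => by simp
  | succ n ih =>
    intro u hc hpos
    by_cases h0 : spt u = ∅
    · exact ih u (by rw [h0]; simp) hpos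
    · have hne : (spt u).Nonempty := Finset.nonempty_iff_ne_empty.2 h0
      obtain ⟨v₀, hv₀, hmin⟩ := Finset.exists_min_image (spt u) u hne
      have hapos : 0 < u v₀ := lt_of_le_of_ne (hpos v₀) (Ne.symm (mem_spt.1 hv₀))
      set M := spt u with hM
      set u' : (V → ℝ) := fun v => u v - if v ∈ M then u v₀ else 0 with hu'
      have hu'nonneg : ∀ v, 0 ≤ u' v := by
        intro v
        rw [hu']
        dsimp only
        split_ifs with h
        · exact sub_nonneg.2 (hmin v h)
        · simpa using hpos v
      have hu'val : ∀ v, v ∉ M → u' v = u v := by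
        intro v h
        rw [hu']
        dsimp only
        rw [if_neg h, sub_zero]
      have hu'zero : ∀ v, v ∉ M → u' v = 0 := by
        intro v h
        rw [hu'val v h]
        by_contra hvu
        exact h (mem_spt.2 hvu)
      have hsptu' : spt u' ⊆ M.erase v₀ := by
        intro v hv
        rw [mem_spt] at hv
        have hvM : v ∈ M := by
          by_contra h
          exact hv (hu'zero v h)
        refine Finset.mem_erase.2 ⟨?_, hvM⟩
        rintro rfl
        apply hv
        rw [hu']
        dsimp only
        rw [if_pos hvM]
        ring
      have hcard' : (spt u').card ≤ n := by
        calc (spt u').card ≤ (M.erase v₀).card := Finset.card_le_card hsptu'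
          _ = M.card - 1 := Finset.card_erase_of_mem hv₀
          _ ≤ n := by
              have := hc
              omega
      obtain ⟨y', hy'0, hy'h, hy'p⟩ := ih u' hcard' hu'nonneg
      have hMnot : y' M = 0 := by
        by_contra h
        have hsub := (hy'p M h).2.1.trans hsptu'
        exact (Finset.notMem_erase v₀ M) (hsub hv₀)
      have hMcard : (0:ℝ) < M.card := by exact_mod_cast Finset.card_pos.2 hne
      refine ⟨Function.update y' M (u v₀ * M.card), ?_, ?_, ?_⟩
      · intro τ
        rw [Function.update_apply]
        split_ifs
        · positivity
        · exact hy'0 τ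
      · intro v
        rw [hmap_update, hy'h v, hMnot, sub_zero, hu']
        dsimp only
        by_cases h : v ∈ M
        · rw [if_pos h, if_pos h, mul_div_assoc, div_self (ne_of_gt hMcard)]
          ring
        · rw [if_neg h, if_neg h]
          ring
      · intro τ hτ
        by_cases hτM : τ = M
        · subst hτM
          refine ⟨hne, Finset.Subset.refl _, fun v w hle hw => ?_⟩
        -- w ∈ spt u, u w ≤ u v ⇒ u v > 0
          have hwpos : 0 < u w := lt_of_le_of_ne (hpos w) (Ne.symm (mem_spt.1 hw))
          exact mem_spt.2 (ne_of_gt (lt_of_lt_of_le hwpos hle))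
        · rw [Function.update_of_ne hτM] at hτ
          obtain ⟨hne', hsub', hup'⟩ := hy'p τ hτ
          refine ⟨hne', (hsub'.trans hsptu').trans (Finset.erase_subset _ _), fun v w hle hw => ?_⟩
          have hwM : w ∈ M := (Finset.erase_subset _ _) (hsptu' (hsub' hw))
          by_cases hvM : v ∈ M
          · refine hup' v w ?_ hw
            rw [hu']
            dsimp only
            rw [if_pos hvM, if_pos hwM]
            linarith
          · exfalso
            have hwpos : 0 < u' w := by
              have := hsub' hw
              rw [mem_spt] at this
              exact lt_of_le_of_ne (hu'nonneg w) (Ne.symm this)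
            have huv : u v = 0 := by
              by_contra h
              exact hvM (mem_spt.2 h)
            have : u' w = u w - u v₀ := by
              rw [hu']
              dsimp only
              rw [if_pos hwM]
            nlinarith [hmin w hwM]

lemma exists_threshold {c : V → ℝ} (hc : ∀ v, 0 ≤ c v) (hsum : ∑ v, c v = 2) :
    ∃ s : ℝ, 0 < s ∧ ∑ v, min (c v) s = 1 := by
  have hcont : ContinuousOn (fun s : ℝ => ∑ v, min (c v) s) (Set.Icc 0 2) :=
    (continuous_finset_sum _ fun v _ => continuous_const.min continuous_id).continuousOn
  have h0 : (∑ v, min (c v) (0:ℝ)) = 0 :=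
    Finset.sum_eq_zero fun v _ => min_eq_right (hc v)
  have h2 : (∑ v, min (c v) (2:ℝ)) = 2 := by
    have hstep : ∀ v ∈ Finset.univ, min (c v) (2:ℝ) = c v := by
      intro v _
      refine min_eq_left ?_
      calc c v ≤ ∑ w, c w := Finset.single_le_sum (fun w _ => hc w) (Finset.mem_univ v)
        _ = 2 := hsum
    rw [Finset.sum_congr rfl hstep, hsum]
  have hmem : (1:ℝ) ∈ Set.Icc ((fun s : ℝ => ∑ v, min (c v) s) 0)
      ((fun s : ℝ => ∑ v, min (c v) s) 2) := by
    dsimp only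
    rw [h0, h2]
    norm_num
  obtain ⟨s, hs, hfs⟩ := intermediate_value_Icc (by norm_num : (0:ℝ) ≤ 2) hcont hmem
  refine ⟨s, ?_, hfs⟩
  rcases lt_or_eq_of_le hs.1 with h | h
  · exact h
  · exfalso
    rw [← h] at hfs
    dsimp only at hfs
    rw [h0] at hfs
    norm_num at hfs

/-! ### Set-level characterizations -/

lemma mem_orderComplex_iff {C : Finset (Finset V)} {c : Finset (Finset V)} :
    c ∈ (orderComplex C).faces ↔ c ⊆ C ∧ ∀ τ₁ ∈ c, ∀ τ₂ ∈ c, τ₁ ⊆ τ₂ ∨ τ₂ ⊆ τ₁ := by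
  unfold orderComplex
  simp only [Finset.mem_filter, Finset.mem_powerset]

lemma mem_KsetK_iff {Y : SComplex V} {p : (V → ℝ) × (Finset V → ℝ)} :
    p ∈ (⋃ σ ∈ Y.faces, (geomReal (simplexOn σ)) ×ˢ (geomReal (Y.dualCell σ))) ↔ KP Y p := by
  rw [Set.mem_iUnion₂]
  constructor
  · rintro ⟨σ, hσ, hp⟩
    rw [Set.mem_prod] at hp
    obtain ⟨hx, hy⟩ := hp
    rw [mem_geomReal_iff] at hx hy
    have hxσ : spt p.1 ⊆ σ := Finset.mem_powerset.1 hx.2.2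
    have hyC := mem_orderComplex_iff.1 hy.2.2
    refine ⟨hx.1, hx.2.1, hy.1, hy.2.1, fun τ hτ => ?_, fun τ₁ τ₂ h1 h2 => ?_⟩
    · have hτ' : τ ∈ spt p.2 := mem_spt.2 hτ
      have := hyC.1 hτ'
      rw [Finset.mem_filter] at this
      exact ⟨this.1, hxσ.trans this.2⟩
    · exact hyC.2 τ₁ (mem_spt.2 h1) τ₂ (mem_spt.2 h2)
  · intro hp
    obtain ⟨τ₀, hτ₀⟩ := exists_ne_zero_of_sum_one hp.2.2.2.1
    have hσY : spt p.1 ∈ Y.faces :=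
      Y.down_closed (hp.2.2.2.2.1 τ₀ hτ₀).1 (hp.2.2.2.2.1 τ₀ hτ₀).2
    refine ⟨spt p.1, hσY, Set.mem_prod.2 ⟨?_, ?_⟩⟩
    · rw [mem_geomReal_iff]
      exact ⟨hp.1, hp.2.1, by
        unfold simplexOn
        exact Finset.mem_powerset.2 (Finset.Subset.refl _)⟩
    · rw [mem_geomReal_iff]
      refine ⟨hp.2.2.1, hp.2.2.2.1, ?_⟩
      unfold dualCell
      rw [mem_orderComplex_iff]
      constructor
      · intro τ hτ
        rw [Finset.mem_filter]
        exact ⟨(hp.2.2.2.2.1 τ (mem_spt.1 hτ)).1, (hp.2.2.2.2.1 τ (mem_spt.1 hτ)).2⟩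
      · exact fun τ₁ h1 τ₂ h2 => hp.2.2.2.2.2 τ₁ τ₂ (mem_spt.1 h1) (mem_spt.1 h2)

/-- membership in `L` -/
def LP (X Y : SComplex V) (p : (V → ℝ) × (Finset V → ℝ)) : Prop :=
  KP Y p ∧ spt p.1 ∈ X.faces

lemma mem_KsetL_iff {X Y : SComplex V} {p : (V → ℝ) × (Finset V → ℝ)} :
    p ∈ (⋃ σ ∈ Y.faces, (geomReal (X.induced σ)) ×ˢ (geomReal (Y.dualCell σ))) ↔ LP X Y p := by
  rw [Set.mem_iUnion₂]
  constructor
  · rintro ⟨σ, hσ, hp⟩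
    rw [Set.mem_prod] at hp
    obtain ⟨hx, hy⟩ := hp
    rw [mem_geomReal_iff] at hx hy
    have hxσ0 := hx.2.2
    unfold induced at hxσ0
    rw [Finset.mem_filter] at hxσ0
    have hxσ : spt p.1 ⊆ σ := hxσ0.2
    have hyC := mem_orderComplex_iff.1 hy.2.2
    refine ⟨⟨hx.1, hx.2.1, hy.1, hy.2.1, fun τ hτ => ?_, fun τ₁ τ₂ h1 h2 => ?_⟩, hxσ0.1⟩
    · have hτ' : τ ∈ spt p.2 := mem_spt.2 hτ
      have := hyC.1 hτ'
      rw [Finset.mem_filter] at this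
      exact ⟨this.1, hxσ.trans this.2⟩
    · exact hyC.2 τ₁ (mem_spt.2 h1) τ₂ (mem_spt.2 h2)
  · rintro ⟨hp, hpX⟩
    obtain ⟨τ₀, hτ₀⟩ := exists_ne_zero_of_sum_one hp.2.2.2.1
    have hσY : spt p.1 ∈ Y.faces :=
      Y.down_closed (hp.2.2.2.2.1 τ₀ hτ₀).1 (hp.2.2.2.2.1 τ₀ hτ₀).2
    refine ⟨spt p.1, hσY, Set.mem_prod.2 ⟨?_, ?_⟩⟩
    · rw [mem_geomReal_iff]
      refine ⟨hp.1, hp.2.1, ?_⟩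
      unfold induced
      rw [Finset.mem_filter]
      exact ⟨hpX, Finset.Subset.refl _⟩
    · rw [mem_geomReal_iff]
      refine ⟨hp.2.2.1, hp.2.2.2.1, ?_⟩
      unfold dualCell
      rw [mem_orderComplex_iff]
      constructor
      · intro τ hτ
        rw [Finset.mem_filter]
        exact ⟨(hp.2.2.2.2.1 τ (mem_spt.1 hτ)).1, (hp.2.2.2.2.1 τ (mem_spt.1 hτ)).2⟩
      · exact fun τ₁ h1 τ₂ h2 => hp.2.2.2.2.2 τ₁ τ₂ (mem_spt.1 h1) (mem_spt.1 h2)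

/-! ### The map `Φ` -/

noncomputable def phiFun (p : (V → ℝ) × (Finset V → ℝ)) : V → ℝ :=
  fun v => (p.1 v + hmap p.2 v) / 2

lemma KP.comb_mem {Y : SComplex V} {p} (hp : KP Y p) {a b : ℝ} (ha : 0 ≤ a) (hb : 0 ≤ b)
    (hab : a + b = 1) : (fun v => a * p.1 v + b * hmap p.2 v) ∈ geomReal Y := by
  rw [mem_geomReal_iff]
  refine ⟨fun v => add_nonneg (mul_nonneg ha (hp.1 v))
    (mul_nonneg hb (hmap_nonneg hp.2.2.1 v)), ?_, ?_⟩
  · rw [Finset.sum_add_distrib, ← Finset.mul_sum, ← Finset.mul_sum, hp.2.1,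
      sum_hmap (fun τ hτ => hp.tau_nonempty hτ), hp.2.2.2.1]
    linarith
  · obtain ⟨τ₀, hτ₀⟩ := exists_ne_zero_of_sum_one hp.2.2.2.1
    obtain ⟨M, hMmem, hmax⟩ := chain_max (sptF p.2) ⟨τ₀, mem_sptF.2 hτ₀⟩
      (fun τ₁ h1 τ₂ h2 => hp.2.2.2.2.2 τ₁ τ₂ (mem_sptF.1 h1) (mem_sptF.1 h2))
    have hMY : M ∈ Y.faces := (hp.2.2.2.2.1 M (mem_sptF.1 hMmem)).1
    refine Y.down_closed hMY ?_
    intro v hv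
    rw [mem_spt] at hv
    by_cases hx : p.1 v = 0
    · have hh : hmap p.2 v ≠ 0 := by
        intro h
        apply hv
        show a * p.1 v + b * hmap p.2 v = 0
        rw [hx, h]
        ring
      obtain ⟨τ, hτ, hvτ⟩ := hmap_exists_of_ne_zero hh
      exact hmax τ (mem_sptF.2 hτ) hvτ
    · exact (hp.2.2.2.2.1 M (mem_sptF.1 hMmem)).2 (mem_spt.2 hx)

lemma KP.phi_mem {Y : SComplex V} {p} (hp : KP Y p) : phiFun p ∈ geomReal Y := by
  have h := hp.comb_mem (a := 1/2) (b := 1/2) (by norm_num) (by norm_num) (by norm_num)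
  convert h using 1
  funext v
  unfold phiFun
  ring

lemma KP.x_mem {Y : SComplex V} {p} (hp : KP Y p) : p.1 ∈ geomReal Y := by
  rw [mem_geomReal_iff]
  obtain ⟨τ₀, hτ₀⟩ := exists_ne_zero_of_sum_one hp.2.2.2.1
  exact ⟨hp.1, hp.2.1, Y.down_closed (hp.2.2.2.2.1 τ₀ hτ₀).1 (hp.2.2.2.2.1 τ₀ hτ₀).2⟩

lemma phi_inj {Y : SComplex V} {p q} (hp : KP Y p) (hq : KP Y q)
    (h : phiFun p = phiFun q) : p = q := by
  have hc : ∀ v, p.1 v + hmap p.2 v = q.1 v + hmap q.2 v := by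
    intro v
    have := congrFun h v
    unfold phiFun at this
    linarith
  have hmineq : ∀ v, min (p.1 v + hmap p.2 v) (sval p.2)
      = min (p.1 v + hmap p.2 v) (sval q.2) := by
    apply min_sum_uniq
    rw [hp.sum_min]
    rw [Finset.sum_congr rfl (fun v _ => by rw [hc v])]
    exact hq.sum_min.symm
  have hmapeq : hmap p.2 = hmap q.2 := by
    funext v
    rw [hp.hmap_eq_min v, hq.hmap_eq_min v, ← hc v, hmineq v]
  have hy : p.2 = q.2 :=
    hmap_inj (sptF p.2).card p.2 q.2 le_rfl hp.chainOK hq.chainOK hmapeq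
  have hx : p.1 = q.1 := by
    funext v
    have := hc v
    rw [hmapeq] at this
    linarith
  exact Prod.ext hx hy

lemma phi_surj {Y : SComplex V} {z : V → ℝ} (hz : z ∈ geomReal Y) :
    ∃ p, KP Y p ∧ phiFun p = z := by
  rw [mem_geomReal_iff] at hz
  set c : V → ℝ := fun v => 2 * z v with hcdef
  have hcpos : ∀ v, 0 ≤ c v := fun v => by
    simp only [hcdef]; linarith [hz.1 v]
  have hcsum : ∑ v, c v = 2 := by
    simp only [hcdef]
    rw [← Finset.mul_sum, hz.2.1, mul_one]
  obtain ⟨s, hs, hfs⟩ := exists_threshold hcpos hcsum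
  set u : V → ℝ := fun v => min (c v) s with hudef
  have hu_nonneg : ∀ v, 0 ≤ u v := fun v => le_min (hcpos v) (le_of_lt hs)
  have hsptu : spt u = spt z := by
    ext v
    rw [mem_spt, mem_spt]
    simp only [hudef, hcdef]
    constructor
    · intro h hzv
      apply h
      rw [hzv, mul_zero]
      exact min_eq_left (le_of_lt hs)
    · intro h
      have hpos : 0 < 2 * z v := by
        have := hz.1 v
        rcases lt_or_eq_of_le this with h' | h'
        · linarith
        · exact absurd h'.symm h
      exact ne_of_gt (lt_min hpos hs)
  obtain ⟨y, hy0, hyh, hyp⟩ := build (spt u).card u le_rfl hu_nonneg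
  set x : V → ℝ := fun v => c v - u v with hxdef
  have hx_nonneg : ∀ v, 0 ≤ x v := fun v => by
    simp only [hxdef, hudef]
    simp [min_le_left]
  have hsumu : ∑ v, u v = 1 := hfs
  have hsumy : ∑ τ, y τ = 1 := by
    rw [← sum_hmap (fun τ hτ => Finset.nonempty_iff_ne_empty.1 (hyp τ hτ).1)]
    rw [Finset.sum_congr rfl (fun v _ => hyh v)]
    exact hsumu
  have hspt_x : ∀ v, x v ≠ 0 → u v = s := by
    intro v hv
    simp only [hxdef, hudef] at hv ⊢
    rcases min_cases (c v) s with ⟨heq, _⟩ | ⟨heq, _⟩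
    · exfalso; apply hv; rw [heq]; ring
    · exact heq
  refine ⟨(x, y), ⟨hx_nonneg, ?_, hy0, hsumy, ?_, ?_⟩, ?_⟩
  · -- sum of x
    have : ∑ v, x v = (∑ v, c v) - ∑ v, u v := by
      simp only [hxdef]
      rw [Finset.sum_sub_distrib]
    rw [this, hcsum, hsumu]
    norm_num
  · -- faces and spt inclusion
    intro τ hτ
    obtain ⟨hτne, hτsub, hτup⟩ := hyp τ hτ
    constructor
    · refine Y.down_closed hz.2.2 ?_
      rw [← hsptu]
      exact hτsub
    · intro v hv
      rw [mem_spt] at hv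
      have huv : u v = s := hspt_x v hv
      obtain ⟨w, hw⟩ := hτne
      refine hτup v w ?_ hw
      rw [huv]
      exact min_le_right _ _
  · -- chain
    intro τ₁ τ₂ h1 h2
    exact upward_comparable (hyp τ₁ h1).2.2 (hyp τ₂ h2).2.2
  · -- phiFun = z
    funext v
    unfold phiFun
    dsimp only
    rw [hyh v]
    simp only [hxdef, hudef, hcdef]
    ring

/-! ### Compactness -/

lemma geomReal_compact {W : Type} [DecidableEq W] [Fintype W] (X : SComplex W) :
    IsCompact (geomReal X) := by
  classical
  have hdecomp : geomReal X = ⋃ σ ∈ X.faces,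
      {f : W → ℝ | (∀ v, 0 ≤ f v) ∧ (∑ v, f v) = 1 ∧ ∀ v ∉ σ, f v = 0} := by
    ext f
    rw [mem_geomReal_iff, Set.mem_iUnion₂]
    constructor
    · intro ⟨h1, h2, h3⟩
      refine ⟨spt f, h3, h1, h2, fun v hv => ?_⟩
      by_contra h
      exact hv (mem_spt.2 h)
    · rintro ⟨σ, hσ, h1, h2, h3⟩
      refine ⟨h1, h2, X.down_closed hσ ?_⟩
      intro v hv
      by_contra hvσ
      exact (mem_spt.1 hv) (h3 v hvσ)
  rw [hdecomp]
  refine Set.Finite.isCompact_biUnion (Finset.finite_toSet _) (fun σ _ => ?_)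
  have hclosed : IsClosed {f : W → ℝ | (∀ v, 0 ≤ f v) ∧ (∑ v, f v) = 1 ∧ ∀ v ∉ σ, f v = 0} := by
    have h1 : IsClosed {f : W → ℝ | ∀ v, 0 ≤ f v} := by
      have : {f : W → ℝ | ∀ v, 0 ≤ f v} = ⋂ v, {f : W → ℝ | 0 ≤ f v} := by
        ext f; simp [Set.mem_iInter]
      rw [this]
      exact isClosed_iInter fun v => isClosed_le continuous_const (continuous_apply v)
    have h2 : IsClosed {f : W → ℝ | (∑ v, f v) = 1} :=
      isClosed_eq (continuous_finset_sum _ fun v _ => continuous_apply v) continuous_const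
    have h3 : IsClosed {f : W → ℝ | ∀ v ∉ σ, f v = 0} := by
      have : {f : W → ℝ | ∀ v ∉ σ, f v = 0} = ⋂ v, ⋂ (_ : v ∉ σ), {f : W → ℝ | f v = 0} := by
        ext f; simp [Set.mem_iInter]
      rw [this]
      exact isClosed_iInter fun v => isClosed_iInter fun _ =>
        isClosed_eq (continuous_apply v) continuous_const
    have : {f : W → ℝ | (∀ v, 0 ≤ f v) ∧ (∑ v, f v) = 1 ∧ ∀ v ∉ σ, f v = 0}
        = {f : W → ℝ | ∀ v, 0 ≤ f v} ∩ ({f : W → ℝ | (∑ v, f v) = 1}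
          ∩ {f : W → ℝ | ∀ v ∉ σ, f v = 0}) := by
      ext f; simp [Set.mem_inter_iff, Set.mem_setOf_eq, and_assoc]
    rw [this]
    exact h1.inter (h2.inter h3)
  refine IsCompact.of_isClosed_subset
    (isCompact_univ_pi (fun _ : W => (isCompact_Icc : IsCompact (Set.Icc (0:ℝ) 1)))) hclosed ?_
  intro f hf
  rw [Set.mem_univ_pi]
  intro v
  refine ⟨hf.1 v, ?_⟩
  calc f v ≤ ∑ w, f w := Finset.single_le_sum (fun w _ => hf.1 w) (Finset.mem_univ v)
    _ = 1 := hf.2.1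

lemma Kset_compact (Y : SComplex V) (F : Finset V → SComplex V) :
    IsCompact (⋃ σ ∈ Y.faces, (geomReal (F σ)) ×ˢ (geomReal (Y.dualCell σ))) :=
  Set.Finite.isCompact_biUnion (Finset.finite_toSet _)
    (fun σ _ => (geomReal_compact _).prod (geomReal_compact _))

/-! ### Continuity -/

lemma hmap_continuous : Continuous (hmap (V := V)) := by
  refine continuous_pi fun v => ?_
  unfold hmap
  refine continuous_finset_sum _ fun τ _ => ?_
  by_cases h : v ∈ τ
  · simp only [if_pos h]
    exact (continuous_apply τ).div_const _
  · simp only [if_neg h]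
    exact continuous_const

lemma phiFun_continuous : Continuous (phiFun (V := V)) := by
  refine continuous_pi fun v => ?_
  unfold phiFun
  exact (((continuous_apply v).comp continuous_fst).add
    ((continuous_apply v).comp (hmap_continuous.comp continuous_snd))).div_const _

/-! ### The key support lemma for the `L` part -/

lemma key_spt {Y : SComplex V} {p q : (V → ℝ) × (Finset V → ℝ)} {β : ℝ}
    (hp : KP Y p) (hq : KP Y q) (hβ0 : 0 ≤ β) (hβ1 : β ≤ 1)
    (hc : ∀ v, q.1 v + hmap q.2 v = (2 - β) * p.1 v + β * hmap p.2 v) :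
    spt q.1 ⊆ spt p.1 := by
  intro v hv
  rw [mem_spt] at hv ⊢
  by_contra hx
  have hqv : hmap q.2 v = min (q.1 v + hmap q.2 v) (sval q.2) := hq.hmap_eq_min v
  have hcv : sval q.2 < q.1 v + hmap q.2 v := by
    by_contra hle
    push_neg at hle
    rw [min_eq_left hle] at hqv
    exact hv (by linarith)
  have hcvB : q.1 v + hmap q.2 v ≤ β * sval p.2 := by
    have h1 := hc v
    rw [hx, mul_zero, zero_add] at h1
    rw [h1]
    exact mul_le_mul_of_nonneg_left (hmap_le_sval hp.2.2.1 v) hβ0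
  have hsumB : ∑ w, min (q.1 w + hmap q.2 w) (β * sval p.2) ≤ β := by
    have hle : ∀ w ∈ Finset.univ,
        min (q.1 w + hmap q.2 w) (β * sval p.2) ≤ β * hmap p.2 w := by
      intro w _
      by_cases hw : p.1 w = 0
      · have h1 := hc w
        rw [hw, mul_zero, zero_add] at h1
        calc min (q.1 w + hmap q.2 w) (β * sval p.2) ≤ q.1 w + hmap q.2 w := min_le_left _ _
          _ = β * hmap p.2 w := h1
      · have h2 : hmap p.2 w = sval p.2 :=
          hmap_eq_sval (fun τ hτ => (hp.2.2.2.2.1 τ hτ).2 (mem_spt.2 hw))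
        rw [h2]
        exact min_le_right _ _
    calc ∑ w, min (q.1 w + hmap q.2 w) (β * sval p.2) ≤ ∑ w, β * hmap p.2 w :=
        Finset.sum_le_sum hle
      _ = β * ∑ w, hmap p.2 w := by rw [Finset.mul_sum]
      _ = β := by rw [sum_hmap (fun τ hτ => hp.tau_nonempty hτ), hp.2.2.2.1, mul_one]
  have hlt : (1:ℝ) < ∑ w, min (q.1 w + hmap q.2 w) (β * sval p.2) := by
    have h1 := hq.sum_min
    rw [← h1]
    refine Finset.sum_lt_sum (fun w _ => min_le_min le_rfl (by linarith))
      ⟨v, Finset.mem_univ v, ?_⟩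
    rw [min_eq_right (le_of_lt hcv), min_eq_left hcvB]
    exact hcv
  linarith

/-! ### The homeomorphism `Φ : K ≃ₜ |Y|` -/

noncomputable def KsetK (Y : SComplex V) : Set ((V → ℝ) × (Finset V → ℝ)) :=
  ⋃ σ ∈ Y.faces, (geomReal (simplexOn σ)) ×ˢ (geomReal (Y.dualCell σ))

lemma mem_KsetK_iff' {Y : SComplex V} {p : (V → ℝ) × (Finset V → ℝ)} :
    p ∈ KsetK Y ↔ KP Y p := mem_KsetK_iff

noncomputable def phiEquiv (Y : SComplex V) : ↥(KsetK Y) ≃ ↥(geomReal Y) :=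
  Equiv.ofBijective
    (fun p => ⟨phiFun (p : (V → ℝ) × (Finset V → ℝ)), (mem_KsetK_iff'.1 p.2).phi_mem⟩)
    (by
      constructor
      · intro p q h
        exact Subtype.ext (phi_inj (mem_KsetK_iff'.1 p.2) (mem_KsetK_iff'.1 q.2)
          (congrArg Subtype.val h))
      · intro z
        obtain ⟨p, hp, hphi⟩ := phi_surj z.2
        exact ⟨⟨p, mem_KsetK_iff'.2 hp⟩, Subtype.ext hphi⟩)

noncomputable def phiHomeo (Y : SComplex V) : ↥(KsetK Y) ≃ₜ ↥(geomReal Y) :=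
  haveI : CompactSpace ↥(KsetK Y) := isCompact_iff_compactSpace.1 (Kset_compact Y simplexOn)
  Continuous.homeoOfEquivCompactToT2 (f := phiEquiv Y)
    (Continuous.subtype_mk (phiFun_continuous.comp continuous_subtype_val) _)

lemma phiHomeo_apply_val (Y : SComplex V) (p : ↥(KsetK Y)) :
    ((phiHomeo Y) p : V → ℝ) = phiFun (p : (V → ℝ) × (Finset V → ℝ)) := rfl

lemma phiFun_symm (Y : SComplex V) (z : ↥(geomReal Y)) :
    phiFun (((phiHomeo Y).symm z : ↥(KsetK Y)) : (V → ℝ) × (Finset V → ℝ)) = (z : V → ℝ) := by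
  have h := (phiHomeo Y).apply_symm_apply z
  have := congrArg Subtype.val h
  rwa [phiHomeo_apply_val] at this

lemma KP.spt_x_subset_phi {Y : SComplex V} {p} (hp : KP Y p) : spt p.1 ⊆ spt (phiFun p) := by
  intro v hv
  rw [mem_spt] at hv ⊢
  intro h
  unfold phiFun at h
  have h2 := hmap_nonneg hp.2.2.1 v
  apply hv
  have h3 : p.1 v + hmap p.2 v = 0 := by linarith
  have h1 := hp.1 v
  linarith

lemma comb2_mem {W : SComplex V} {z x' : V → ℝ} (hz : z ∈ geomReal W)
    (hx1 : ∀ v, 0 ≤ x' v) (hx2 : ∑ v, x' v = 1) (hspt : spt x' ⊆ spt z)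
    {t : ℝ} (ht0 : 0 ≤ t) (ht1 : t ≤ 1) :
    (fun v => (1 - t) * x' v + t * z v) ∈ geomReal W := by
  rw [mem_geomReal_iff] at hz ⊢
  refine ⟨fun v => add_nonneg (mul_nonneg (by linarith) (hx1 v))
    (mul_nonneg ht0 (hz.1 v)), ?_, ?_⟩
  · rw [Finset.sum_add_distrib, ← Finset.mul_sum, ← Finset.mul_sum, hx2, hz.2.1]
    ring
  · refine W.down_closed hz.2.2 ?_
    intro v hv
    rw [mem_spt] at hv
    by_cases hzv : z v = 0
    · exfalso
      have hxv : x' v = 0 := by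
        by_contra h
        exact (mem_spt.1 (hspt (mem_spt.2 h))) hzv
      apply hv
      show (1 - t) * x' v + t * z v = 0
      rw [hxv, hzv]
      ring
    · exact mem_spt.2 hzv

/-- the straight-line path from `π p` to `Φ p`, as a function of time `t ∈ [0,1]` -/
noncomputable def wFun (t : ℝ) (p : (V → ℝ) × (Finset V → ℝ)) : V → ℝ :=
  fun v => ((2 - t) / 2) * p.1 v + (t / 2) * hmap p.2 v

lemma KP.wFun_mem {Y : SComplex V} {p} (hp : KP Y p) {t : ℝ} (ht0 : 0 ≤ t) (ht1 : t ≤ 1) :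
    wFun t p ∈ geomReal Y :=
  hp.comb_mem (by linarith) (by linarith) (by ring)

lemma wFun_zero (p : (V → ℝ) × (Finset V → ℝ)) : wFun 0 p = p.1 := by
  funext v
  unfold wFun
  ring

lemma wFun_one (p : (V → ℝ) × (Finset V → ℝ)) : wFun 1 p = phiFun p := by
  funext v
  unfold wFun phiFun
  ring

lemma wFun_continuous :
    Continuous (fun q : (↥unitInterval × ↥(KsetK (V := V) Y))
      => wFun (q.1 : ℝ) (q.2 : (V → ℝ) × (Finset V → ℝ))) := by
  refine continuous_pi fun v => ?_
  have ht : Continuous (fun q : (↥unitInterval × ↥(KsetK (V := V) Y)) => (q.1 : ℝ)) :=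
    continuous_subtype_val.comp continuous_fst
  have hx : Continuous (fun q : (↥unitInterval × ↥(KsetK (V := V) Y))
      => ((q.2 : (V → ℝ) × (Finset V → ℝ))).1 v) :=
    (continuous_apply v).comp (continuous_fst.comp (continuous_subtype_val.comp continuous_snd))
  have hh : Continuous (fun q : (↥unitInterval × ↥(KsetK (V := V) Y))
      => hmap ((q.2 : (V → ℝ) × (Finset V → ℝ))).2 v) :=
    (continuous_apply v).comp
      (hmap_continuous.comp (continuous_snd.comp (continuous_subtype_val.comp continuous_snd)))
  exact (((continuous_const.sub ht).div_const 2).mul hx).add ((ht.div_const 2).mul hh)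

lemma symm_x_KP (Y : SComplex V) (z : ↥(geomReal Y)) :
    KP Y (((phiHomeo Y).symm z : ↥(KsetK Y)) : (V → ℝ) × (Finset V → ℝ)) :=
  mem_KsetK_iff'.1 ((phiHomeo Y).symm z).2

lemma symm_x_spt (Y : SComplex V) (z : ↥(geomReal Y)) :
    spt ((((phiHomeo Y).symm z : ↥(KsetK Y)) : (V → ℝ) × (Finset V → ℝ)).1)
      ⊆ spt (z : V → ℝ) := by
  have h := (symm_x_KP Y z).spt_x_subset_phi
  rwa [phiFun_symm] at h

theorem part1 (Y : SComplex V) :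
    ∃ he : ContinuousMap.HomotopyEquiv
        (↥(⋃ σ ∈ Y.faces, (geomReal (simplexOn σ)) ×ˢ (geomReal (Y.dualCell σ))))
        (↥(geomReal Y)),
      ∀ p, (he.toFun p : V → ℝ) =
        (p : ((V → ℝ) × ((Finset V) → ℝ))).1 := by
  classical
  have hKP : ∀ p : ↥(KsetK Y), KP Y (p : (V → ℝ) × (Finset V → ℝ)) :=
    fun p => mem_KsetK_iff'.1 p.2
  let π : C(↥(KsetK Y), ↥(geomReal Y)) :=
    ⟨fun p => ⟨(p : (V → ℝ) × (Finset V → ℝ)).1, (hKP p).x_mem⟩,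
      Continuous.subtype_mk (continuous_fst.comp continuous_subtype_val) _⟩
  let g : C(↥(geomReal Y), ↥(KsetK Y)) :=
    ⟨(phiHomeo Y).symm, (phiHomeo Y).symm.continuous⟩
  have hleft : (g.comp π).Homotopic (ContinuousMap.id _) := by
    refine ⟨{ toFun := fun q => (phiHomeo Y).symm
                ⟨wFun (q.1 : ℝ) (q.2 : (V → ℝ) × (Finset V → ℝ)),
                  (hKP q.2).wFun_mem q.1.2.1 q.1.2.2⟩,
              continuous_toFun :=
                (phiHomeo Y).symm.continuous.comp
                  (Continuous.subtype_mk (wFun_continuous (Y := Y)) _),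
              map_zero_left := ?_, map_one_left := ?_ }⟩
    · intro p
      have harg : (⟨wFun ((0 : unitInterval) : ℝ) (p : (V → ℝ) × (Finset V → ℝ)),
          (hKP p).wFun_mem (0 : unitInterval).2.1 (0 : unitInterval).2.2⟩ : ↥(geomReal Y))
          = π p := by
        apply Subtype.ext
        show wFun ((0 : unitInterval) : ℝ) (p : (V → ℝ) × (Finset V → ℝ)) = _
        have h0 : ((0 : unitInterval) : ℝ) = 0 := rfl
        rw [h0, wFun_zero]
        rfl
      show (phiHomeo Y).symm _ = g (π p)
      rw [harg]
      rfl
    · intro p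
      show (phiHomeo Y).symm _ = p
      have hstep : (⟨wFun ((1 : unitInterval) : ℝ) (p : (V → ℝ) × (Finset V → ℝ)),
          (hKP p).wFun_mem (1 : unitInterval).2.1 (1 : unitInterval).2.2⟩ : ↥(geomReal Y))
          = (phiHomeo Y) p := by
        apply Subtype.ext
        rw [phiHomeo_apply_val]
        have h1 : ((1 : unitInterval) : ℝ) = 1 := rfl
        show wFun ((1 : unitInterval) : ℝ) _ = _
        rw [h1, wFun_one]
      rw [hstep, Homeomorph.symm_apply_apply]
  have hright : (π.comp g).Homotopic (ContinuousMap.id _) := by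
    have hcont : Continuous (fun q : ↥unitInterval × ↥(geomReal Y) =>
        (fun v => (1 - (q.1 : ℝ)) *
            ((((phiHomeo Y).symm q.2 : ↥(KsetK Y)) : (V → ℝ) × (Finset V → ℝ)).1 v)
          + (q.1 : ℝ) * (q.2 : V → ℝ) v)) := by
      refine continuous_pi fun v => ?_
      have ht : Continuous (fun q : ↥unitInterval × ↥(geomReal Y) => (q.1 : ℝ)) :=
        continuous_subtype_val.comp continuous_fst
      have hx : Continuous (fun q : ↥unitInterval × ↥(geomReal Y) =>
          ((((phiHomeo Y).symm q.2 : ↥(KsetK Y)) : (V → ℝ) × (Finset V → ℝ)).1 v)) :=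
        (continuous_apply v).comp (continuous_fst.comp (continuous_subtype_val.comp
          ((phiHomeo Y).symm.continuous.comp continuous_snd)))
      have hz : Continuous (fun q : ↥unitInterval × ↥(geomReal Y) => (q.2 : V → ℝ) v) :=
        (continuous_apply v).comp (continuous_subtype_val.comp continuous_snd)
      exact ((continuous_const.sub ht).mul hx).add (ht.mul hz)
    refine ⟨{ toFun := fun q =>
                ⟨fun v => (1 - (q.1 : ℝ)) *
                    ((((phiHomeo Y).symm q.2 : ↥(KsetK Y)) : (V → ℝ) × (Finset V → ℝ)).1 v)
                  + (q.1 : ℝ) * (q.2 : V → ℝ) v,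
                  comb2_mem q.2.2 (symm_x_KP Y q.2).1 (symm_x_KP Y q.2).2.1
                    (symm_x_spt Y q.2) q.1.2.1 q.1.2.2⟩,
              continuous_toFun := Continuous.subtype_mk hcont _,
              map_zero_left := ?_, map_one_left := ?_ }⟩
    · intro z
      apply Subtype.ext
      funext v
      show (1 - ((0 : unitInterval) : ℝ)) * _ + ((0 : unitInterval) : ℝ) * _ = _
      have h0 : ((0 : unitInterval) : ℝ) = 0 := rfl
      rw [h0]
      have hr : ((ContinuousMap.comp π g) z : V → ℝ) v
          = ((((phiHomeo Y).symm z : ↥(KsetK Y)) : (V → ℝ) × (Finset V → ℝ)).1 v) := rfl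
      rw [hr]
      ring
    · intro z
      apply Subtype.ext
      funext v
      show (1 - ((1 : unitInterval) : ℝ)) * _ + ((1 : unitInterval) : ℝ) * _ = _
      have h1 : ((1 : unitInterval) : ℝ) = 1 := rfl
      rw [h1]
      show _ = (z : V → ℝ) v
      ring
  exact ⟨⟨π, g, hleft, hright⟩, fun p => rfl⟩

/-! ### The `L` part -/

noncomputable def LsetK (X Y : SComplex V) : Set ((V → ℝ) × (Finset V → ℝ)) :=
  ⋃ σ ∈ Y.faces, (geomReal (X.induced σ)) ×ˢ (geomReal (Y.dualCell σ))

lemma mem_LsetK_iff' {X Y : SComplex V} {p : (V → ℝ) × (Finset V → ℝ)} :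
    p ∈ LsetK X Y ↔ LP X Y p := mem_KsetL_iff

lemma geomReal_inter_subset (X Y : SComplex V) :
    geomReal (X.inter Y) ⊆ geomReal Y := by
  intro f hf
  rw [mem_geomReal_iff] at hf ⊢
  refine ⟨hf.1, hf.2.1, ?_⟩
  have := hf.2.2
  unfold inter at this
  exact (Finset.mem_inter.1 this).2

lemma spt_mem_inter_X {X Y : SComplex V} {f : V → ℝ} (hf : f ∈ geomReal (X.inter Y)) :
    spt f ∈ X.faces := by
  rw [mem_geomReal_iff] at hf
  have := hf.2.2
  unfold inter at this
  exact (Finset.mem_inter.1 this).1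

lemma LP.x_memZ {X Y : SComplex V} {p} (hp : LP X Y p) : p.1 ∈ geomReal (X.inter Y) := by
  have h := hp.1.x_mem
  rw [mem_geomReal_iff] at h ⊢
  refine ⟨h.1, h.2.1, ?_⟩
  show spt p.1 ∈ (X.inter Y).faces
  unfold inter
  exact Finset.mem_inter.2 ⟨hp.2, h.2.2⟩

lemma key_symm_spt {Y : SComplex V} {p : (V → ℝ) × (Finset V → ℝ)} (hp : KP Y p)
    {t : ℝ} (ht0 : 0 ≤ t) (ht1 : t ≤ 1) (w : ↥(geomReal Y))
    (hw : (w : V → ℝ) = wFun t p) :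
    spt ((((phiHomeo Y).symm w : ↥(KsetK Y)) : (V → ℝ) × (Finset V → ℝ)).1) ⊆ spt p.1 := by
  have hq := symm_x_KP Y w
  refine key_spt hp hq ht0 ht1 ?_
  intro v
  have hphi := congrFun (phiFun_symm Y w) v
  rw [hw] at hphi
  unfold phiFun at hphi
  unfold wFun at hphi
  linarith

theorem part2 (X Y : SComplex V) :
    ∃ he : ContinuousMap.HomotopyEquiv
        (↥(⋃ σ ∈ Y.faces, (geomReal (X.induced σ)) ×ˢ (geomReal (Y.dualCell σ))))
        (↥(geomReal (X.inter Y))),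
      ∀ p, (he.toFun p : V → ℝ) =
        (p : ((V → ℝ) × ((Finset V) → ℝ))).1 := by
  classical
  have hLP : ∀ p : ↥(LsetK X Y), LP X Y (p : (V → ℝ) × (Finset V → ℝ)) :=
    fun p => mem_LsetK_iff'.1 p.2
  -- the inclusion |X ∩ Y| ⊆ |Y| on points
  let zY : ↥(geomReal (X.inter Y)) → ↥(geomReal Y) :=
    fun z => ⟨(z : V → ℝ), geomReal_inter_subset X Y z.2⟩
  have hzYcont : Continuous zY := Continuous.subtype_mk continuous_subtype_val _
  let π : C(↥(LsetK X Y), ↥(geomReal (X.inter Y))) :=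
    ⟨fun p => ⟨(p : (V → ℝ) × (Finset V → ℝ)).1, (hLP p).x_memZ⟩,
      Continuous.subtype_mk (continuous_fst.comp continuous_subtype_val) _⟩
  -- the homotopy inverse
  have hgmem : ∀ z : ↥(geomReal (X.inter Y)),
      (((phiHomeo Y).symm (zY z) : ↥(KsetK Y)) : (V → ℝ) × (Finset V → ℝ)) ∈ LsetK X Y := by
    intro z
    refine mem_LsetK_iff'.2 ⟨symm_x_KP Y (zY z), ?_⟩
    refine X.down_closed (spt_mem_inter_X z.2) ?_
    exact symm_x_spt Y (zY z)
  let g : C(↥(geomReal (X.inter Y)), ↥(LsetK X Y)) :=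
    ⟨fun z => ⟨(((phiHomeo Y).symm (zY z) : ↥(KsetK Y)) : (V → ℝ) × (Finset V → ℝ)), hgmem z⟩,
      Continuous.subtype_mk (continuous_subtype_val.comp
        ((phiHomeo Y).symm.continuous.comp hzYcont)) _⟩
  have hleft : (g.comp π).Homotopic (ContinuousMap.id _) := by
    have hwmem : ∀ (q : ↥unitInterval × ↥(LsetK X Y)),
        wFun (q.1 : ℝ) ((q.2 : (V → ℝ) × (Finset V → ℝ))) ∈ geomReal Y :=
      fun q => (hLP q.2).1.wFun_mem q.1.2.1 q.1.2.2
    have hFmem : ∀ (q : ↥unitInterval × ↥(LsetK X Y)),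
        (((phiHomeo Y).symm ⟨wFun (q.1 : ℝ) ((q.2 : (V → ℝ) × (Finset V → ℝ))), hwmem q⟩ :
          ↥(KsetK Y)) : (V → ℝ) × (Finset V → ℝ)) ∈ LsetK X Y := by
      intro q
      refine mem_LsetK_iff'.2 ⟨symm_x_KP Y _, ?_⟩
      refine X.down_closed (hLP q.2).2 ?_
      exact key_symm_spt (hLP q.2).1 q.1.2.1 q.1.2.2 _ rfl
    refine ⟨{ toFun := fun q =>
                ⟨(((phiHomeo Y).symm
                    ⟨wFun (q.1 : ℝ) ((q.2 : (V → ℝ) × (Finset V → ℝ))), hwmem q⟩ :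
                  ↥(KsetK Y)) : (V → ℝ) × (Finset V → ℝ)), hFmem q⟩,
              continuous_toFun := ?_, map_zero_left := ?_, map_one_left := ?_ }⟩
    · refine Continuous.subtype_mk ?_ _
      refine continuous_subtype_val.comp ?_
      refine (phiHomeo Y).symm.continuous.comp ?_
      refine Continuous.subtype_mk ?_ _
      have : Continuous (fun q : ↥unitInterval × ↥(LsetK X Y) =>
          (q.1, (⟨(q.2 : (V → ℝ) × (Finset V → ℝ)), mem_KsetK_iff'.2 (hLP q.2).1⟩ :
            ↥(KsetK Y)))) :=
        continuous_fst.prodMk (Continuous.subtype_mk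
          (continuous_subtype_val.comp continuous_snd) _)
      exact (wFun_continuous (Y := Y)).comp this
    · intro p
      apply Subtype.ext
      have harg : (⟨wFun ((0 : unitInterval) : ℝ) ((p : (V → ℝ) × (Finset V → ℝ))),
          hwmem (0, p)⟩ : ↥(geomReal Y)) = zY (π p) := by
        apply Subtype.ext
        show wFun ((0 : unitInterval) : ℝ) ((p : (V → ℝ) × (Finset V → ℝ))) = _
        have h0 : ((0 : unitInterval) : ℝ) = 0 := rfl
        rw [h0, wFun_zero]
        rfl
      show (((phiHomeo Y).symm _ : ↥(KsetK Y)) : (V → ℝ) × (Finset V → ℝ)) = _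
      rw [harg]
      rfl
    · intro p
      apply Subtype.ext
      have harg : (⟨wFun ((1 : unitInterval) : ℝ) ((p : (V → ℝ) × (Finset V → ℝ))),
          hwmem (1, p)⟩ : ↥(geomReal Y))
          = (phiHomeo Y) ⟨(p : (V → ℝ) × (Finset V → ℝ)), mem_KsetK_iff'.2 (hLP p).1⟩ := by
        apply Subtype.ext
        rw [phiHomeo_apply_val]
        show wFun ((1 : unitInterval) : ℝ) ((p : (V → ℝ) × (Finset V → ℝ))) = _
        have h1 : ((1 : unitInterval) : ℝ) = 1 := rfl
        rw [h1, wFun_one]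
      show (((phiHomeo Y).symm _ : ↥(KsetK Y)) : (V → ℝ) × (Finset V → ℝ)) = _
      rw [harg, Homeomorph.symm_apply_apply]
      rfl
  have hright : (π.comp g).Homotopic (ContinuousMap.id _) := by
    have hmem : ∀ (q : ↥unitInterval × ↥(geomReal (X.inter Y))),
        (fun v => (1 - (q.1 : ℝ)) *
            ((((phiHomeo Y).symm (zY q.2) : ↥(KsetK Y)) : (V → ℝ) × (Finset V → ℝ)).1 v)
          + (q.1 : ℝ) * (q.2 : V → ℝ) v) ∈ geomReal (X.inter Y) := by
      intro q
      exact comb2_mem q.2.2 (symm_x_KP Y (zY q.2)).1 (symm_x_KP Y (zY q.2)).2.1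
        (symm_x_spt Y (zY q.2)) q.1.2.1 q.1.2.2
    have hcont : Continuous (fun q : ↥unitInterval × ↥(geomReal (X.inter Y)) =>
        (fun v => (1 - (q.1 : ℝ)) *
            ((((phiHomeo Y).symm (zY q.2) : ↥(KsetK Y)) : (V → ℝ) × (Finset V → ℝ)).1 v)
          + (q.1 : ℝ) * (q.2 : V → ℝ) v)) := by
      refine continuous_pi fun v => ?_
      have ht : Continuous (fun q : ↥unitInterval × ↥(geomReal (X.inter Y)) => (q.1 : ℝ)) :=
        continuous_subtype_val.comp continuous_fst
      have hx : Continuous (fun q : ↥unitInterval × ↥(geomReal (X.inter Y)) =>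
          ((((phiHomeo Y).symm (zY q.2) : ↥(KsetK Y)) : (V → ℝ) × (Finset V → ℝ)).1 v)) :=
        (continuous_apply v).comp (continuous_fst.comp (continuous_subtype_val.comp
          ((phiHomeo Y).symm.continuous.comp (hzYcont.comp continuous_snd))))
      have hz : Continuous (fun q : ↥unitInterval × ↥(geomReal (X.inter Y)) =>
          (q.2 : V → ℝ) v) :=
        (continuous_apply v).comp (continuous_subtype_val.comp continuous_snd)
      exact ((continuous_const.sub ht).mul hx).add (ht.mul hz)
    refine ⟨{ toFun := fun q =>
                ⟨fun v => (1 - (q.1 : ℝ)) *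
                    ((((phiHomeo Y).symm (zY q.2) : ↥(KsetK Y)) :
                      (V → ℝ) × (Finset V → ℝ)).1 v)
                  + (q.1 : ℝ) * (q.2 : V → ℝ) v, hmem q⟩,
              continuous_toFun := Continuous.subtype_mk hcont _,
              map_zero_left := ?_, map_one_left := ?_ }⟩
    · intro z
      apply Subtype.ext
      funext v
      show (1 - ((0 : unitInterval) : ℝ)) * _ + ((0 : unitInterval) : ℝ) * _ = _
      have h0 : ((0 : unitInterval) : ℝ) = 0 := rfl
      rw [h0]
      have hr : ((ContinuousMap.comp π g) z : V → ℝ) v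
          = ((((phiHomeo Y).symm (zY z) : ↥(KsetK Y)) :
              (V → ℝ) × (Finset V → ℝ)).1 v) := rfl
      rw [hr]
      ring
    · intro z
      apply Subtype.ext
      funext v
      show (1 - ((1 : unitInterval) : ℝ)) * _ + ((1 : unitInterval) : ℝ) * _ = _
      have h1 : ((1 : unitInterval) : ℝ) = 1 := rfl
      rw [h1]
      show _ = (z : V → ℝ) v
      ring
  exact ⟨⟨π, g, hleft, hright⟩, fun p => rfl⟩

end SResolution

open SComplex in
/-- **Lemma (simplicial resolution).** Let `X, Y` be simplicial complexes on
the same vertex set `V`, let `Δ` be the full simplex on `V`, and set (inside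
`|Y| × |sd(Y)|`) `K' = ⋃_{σ ∈ Y} |Δ[σ]| × |D_Y(σ)|` and
`L = ⋃_{σ ∈ Y} |X[σ]| × |D_Y(σ)|`.  Then the first-coordinate projection
`π : K' → |Y|` is a homotopy equivalence, and so is its restriction
`π|_L : L → |X ∩ Y|`.  (Note `Δ[σ]` is the full simplex on `σ`.) -/
theorem projection_homotopy_equiv {V : Type} [DecidableEq V] [Fintype V]
    (X Y : SComplex V) :
    (∃ he : ContinuousMap.HomotopyEquiv
        (↥(⋃ σ ∈ Y.faces, (geomReal (simplexOn σ)) ×ˢ (geomReal (Y.dualCell σ))))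
        (↥(geomReal Y)),
      ∀ p, (he.toFun p : V → ℝ) =
        (p : ((V → ℝ) × ((Finset V) → ℝ))).1) ∧
    (∃ he : ContinuousMap.HomotopyEquiv
        (↥(⋃ σ ∈ Y.faces, (geomReal (X.induced σ)) ×ˢ (geomReal (Y.dualCell σ))))
        (↥(geomReal (X.inter Y))),
      ∀ p, (he.toFun p : V → ℝ) =
        (p : ((V → ℝ) × ((Finset V) → ℝ))).1) := by
  exact ⟨SResolution.part1 Y, SResolution.part2 X Y⟩
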